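/- Let ε ∈ (0,1), let a, b ≥ 0 be reals, and let C ≥ 1. If (1+ε)^a (1−ε)^b ≤ C, then (1−ε)·a ≤ b + ln(C)/ε. -/

import Mathlib

open Real

lemma lemA {ε : ℝ} (h0 : 0 < ε) (h1 : ε < 1) : ε * (1 - ε) ≤ Real.log (1 + ε) := by
  have h := Real.one_sub_inv_le_log_of_pos (x := 1 + ε) (by linarith)
  have he : 1 - (1+ε)⁻¹ = ε / (1+ε) := by field_simp; ring
  rw [he] at h
  refine le_trans ?_ h
  rw [le_div_iff₀ (by linarith)]
  nlinarith [sq_nonneg ε]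

lemma lemB {ε : ℝ} (h0 : 0 < ε) (h1 : ε < 1) :
    (1 - ε) * (-Real.log (1 - ε)) ≤ Real.log (1 + ε) := by
  set f : ℝ → ℝ := fun x => Real.log (1 + x) + (1 - x) * Real.log (1 - x) with hf
  have hderiv : ∀ x ∈ Set.Ioo (0:ℝ) ε,
      HasDerivAt f ((1 + x)⁻¹ + ((-1) * Real.log (1 - x) + (1 - x) * ((1 - x)⁻¹ * (-1)))) x := by
    intro x hx
    obtain ⟨hx0, hxe⟩ := hx
    have hx1 : x < 1 := lt_trans hxe h1
    have hd1 : HasDerivAt (fun x : ℝ => Real.log (1 + x)) (1 + x)⁻¹ x := by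
      have := (Real.hasDerivAt_log (by linarith : (1:ℝ) + x ≠ 0)).comp x
        ((hasDerivAt_id x).const_add 1)
      simpa [Function.comp_def] using this
    have hlog : HasDerivAt (fun x : ℝ => Real.log (1 - x)) ((1 - x)⁻¹ * (-1)) x := by
      have := (Real.hasDerivAt_log (by linarith : (1:ℝ) - x ≠ 0)).comp x
        (((hasDerivAt_id x).neg).const_add 1)
      simpa [Function.comp_def] using this
    have hlin : HasDerivAt (fun x : ℝ => 1 - x) (-1) x := by
      simpa [Function.comp_def, ← sub_eq_add_neg] using ((hasDerivAt_id x).neg).const_add 1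
    exact hd1.add (hlin.mul hlog)
  have key : 0 ≤ f ε := by
    have hmono : MonotoneOn f (Set.Icc 0 ε) := by
      apply monotoneOn_of_deriv_nonneg (convex_Icc 0 ε)
      · apply ContinuousOn.add
        · exact Real.continuousOn_log.comp (by fun_prop) (fun x hx => by
            simp only [Set.mem_Icc] at hx
            simp only [Set.mem_compl_iff, Set.mem_singleton_iff]
            intro hc; linarith [hx.1])
        · apply ContinuousOn.mul (by fun_prop)
          exact Real.continuousOn_log.comp (by fun_prop) (fun x hx => by
            simp only [Set.mem_Icc] at hx
            simp only [Set.mem_compl_iff, Set.mem_singleton_iff]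
            intro hc; linarith [hx.2])
      · intro x hx
        rw [interior_Icc] at hx
        exact ((hderiv x hx).differentiableAt).differentiableWithinAt
      · intro x hx
        rw [interior_Icc] at hx
        rw [(hderiv x hx).deriv]
        obtain ⟨hx0, hxe⟩ := hx
        have hx1 : x < 1 := lt_trans hxe h1
        have hinv : (1 - x) * ((1 - x)⁻¹ * (-1)) = -1 := by
          rw [← mul_assoc, mul_inv_cancel₀ (by linarith : (1:ℝ) - x ≠ 0)]; ring
        rw [hinv]
        have hlog : Real.log (1 - x) ≤ -x := by
          have := Real.log_le_sub_one_of_pos (x := 1 - x) (by linarith)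
          linarith
        have hgt : (0:ℝ) < 1 + x := by linarith
        have h3 : 1 - (1+x)⁻¹ = x / (1+x) := by field_simp; ring
        have h2 : x / (1 + x) ≤ x := by
          rw [div_le_iff₀ hgt]; nlinarith
        nlinarith
    have := hmono (Set.left_mem_Icc.2 h0.le) (Set.right_mem_Icc.2 h0.le) h0.le
    simp only [hf, Real.log_one, sub_zero, one_mul, add_zero, mul_zero] at this
    simpa [hf] using this
  simp only [hf] at key
  nlinarith [key]

theorem potential_bound_to_linear (ε a b C : ℝ) (hε0 : 0 < ε) (hε1 : ε < 1)
    (ha : 0 ≤ a) (hb : 0 ≤ b) (hC : 1 ≤ C)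
    (h : (1 + ε) ^ a * (1 - ε) ^ b ≤ C) :
    (1 - ε) * a ≤ b + Real.log C / ε := by
  have h1p : (0:ℝ) < 1 + ε := by linarith
  have h1m : (0:ℝ) < 1 - ε := by linarith
  have hlogC : 0 ≤ Real.log C := Real.log_nonneg hC
  have hprod : (0:ℝ) < (1 + ε) ^ a * (1 - ε) ^ b :=
    mul_pos (Real.rpow_pos_of_pos h1p a) (Real.rpow_pos_of_pos h1m b)
  have hlog : a * Real.log (1 + ε) + b * Real.log (1 - ε) ≤ Real.log C := by
    have := Real.log_le_log hprod h
    rwa [Real.log_mul (ne_of_gt (Real.rpow_pos_of_pos h1p a))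
      (ne_of_gt (Real.rpow_pos_of_pos h1m b)), Real.log_rpow h1p, Real.log_rpow h1m] at this
  set L := Real.log (1 + ε) with hL
  have hLpos : 0 < L := Real.log_pos (by linarith)
  have hA : ε * (1 - ε) ≤ L := lemA hε0 hε1
  have hB : (1 - ε) * (-Real.log (1 - ε)) ≤ L := lemB hε0 hε1
  have h2 : a * L ≤ Real.log C + b * (-Real.log (1 - ε)) := by linarith
  have h3 : (1 - ε) * a * L ≤ (L / ε) * Real.log C + b * L := by
    have e1 : b * ((1 - ε) * (-Real.log (1 - ε))) ≤ b * L := mul_le_mul_of_nonneg_left hB hb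
    have e2 : (1 - ε) * Real.log C ≤ (L / ε) * Real.log C := by
      apply mul_le_mul_of_nonneg_right _ hlogC
      rw [le_div_iff₀ hε0]; nlinarith
    nlinarith [mul_le_mul_of_nonneg_left h2 h1m.le]
  have h4 : ((1 - ε) * a) * L ≤ (b + Real.log C / ε) * L := by
    calc ((1 - ε) * a) * L ≤ (L / ε) * Real.log C + b * L := h3
      _ = (b + Real.log C / ε) * L := by field_simp; ring
  exact le_of_mul_le_mul_right h4 hLpos
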